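/- Let n be a Heisenberg Lie algebra of dimension 2m+1 with m ≥ 2 (basis e_i, f_i, z with {e_i, f_i} = z for 1 ≤ i ≤ m, all other brackets zero), g the abelian Lie algebra on the same space, and x·y a post-Lie algebra structure on (g,n). Then Z(n)·n = n·Z(n) = 0, i.e., z·x = x·z = 0 for all x, and x∘y := (1/2)(x·y + y·x) defines a commutative post-Lie algebra structure on n. -/

import Mathlib

/-- Let `n` be the Heisenberg Lie algebra of dimension `2m+1`, `m ≥ 2`, with basis
`e_i, f_i, z` and `{e_i,f_i} = z`, let `g` be abelian on the same space, and let `x·y`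
be a PA-structure on `(g,n)`. Then `Z(n)·n = n·Z(n) = 0` and `x∘y = (1/2)(x·y + y·x)`
defines a CPA-structure on `n`. -/
theorem stmt14 {K V : Type*} [Field K] [CharZero K] [AddCommGroup V] [Module K V]
    (m : ℕ) (hm : 2 ≤ m)
    (b : Module.Basis (Fin m ⊕ Fin m ⊕ Unit) K V)
    (n : V →ₗ[K] V →ₗ[K] V)
    (hna : ∀ x, n x x = 0)
    (hef : ∀ i j, n (b (Sum.inl i)) (b (Sum.inr (Sum.inl j)))
      = if i = j then b (Sum.inr (Sum.inr ())) else 0)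
    (hee : ∀ i j, n (b (Sum.inl i)) (b (Sum.inl j)) = 0)
    (hff : ∀ i j, n (b (Sum.inr (Sum.inl i))) (b (Sum.inr (Sum.inl j))) = 0)
    (hez : ∀ i, n (b (Sum.inl i)) (b (Sum.inr (Sum.inr ()))) = 0)
    (hfz : ∀ i, n (b (Sum.inr (Sum.inl i))) (b (Sum.inr (Sum.inr ()))) = 0)
    (mul : V →ₗ[K] V →ₗ[K] V)
    (hp1 : ∀ x y, mul x y - mul y x = - n x y)
    (hp2 : ∀ x y z, mul x (mul y z) = mul y (mul x z))
    (hp3 : ∀ x y z, mul x (n y z) = n (mul x y) z + n y (mul x z))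
    (c : V → V → V)
    (hc : ∀ x y, c x y = (2 : K)⁻¹ • (mul x y + mul y x)) :
    (∀ x : V, mul (b (Sum.inr (Sum.inr ()))) x = 0 ∧
      mul x (b (Sum.inr (Sum.inr ()))) = 0) ∧
    ((∀ x y, c x y = c y x) ∧
     (∀ x y z, c (n x y) z = c x (c y z) - c y (c x z)) ∧
     (∀ x y z, c x (n y z) = n (c x y) z + n y (c x z))) := by
  classical
  set z : V := b (Sum.inr (Sum.inr ())) with hzdef
  set ζ : V →ₗ[K] K := b.coord (Sum.inr (Sum.inr ())) with hζdef
  have hζz : ζ z = 1 := by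
    simp [hζdef, hzdef, Module.Basis.coord_apply]
  -- antisymmetry of n
  have hanti : ∀ x y : V, n y x = - n x y := by
    intro x y
    have h := hna (x + y)
    simp only [map_add, LinearMap.add_apply, hna] at h
    rw [zero_add, add_zero] at h
    exact eq_neg_of_add_eq_zero_left h
  -- n x z = 0 and n z x = 0
  have hxz0 : ∀ x : V, n x z = 0 := by
    have h : n.flip z = 0 := by
      apply b.ext
      intro i
      rcases i with i | i | ⟨⟩
      · simpa using hez i
      · simpa using hfz i
      · simpa using hna z
    intro x
    have := congrArg (fun f : V →ₗ[K] V => f x) h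
    simpa using this
  have hnz0 : ∀ x : V, n z x = 0 := by
    intro x
    rw [hanti x z, hxz0, neg_zero]
  -- n maps into span z
  have hrep : ∀ x y : V, n x y = ζ (n x y) • z := by
    have h : n = n.compr₂ ((LinearMap.toSpanSingleton K V z).comp ζ) := by
      apply LinearMap.ext_basis b b
      intro i j
      simp only [LinearMap.compr₂_apply, LinearMap.comp_apply,
        LinearMap.toSpanSingleton_apply]
      rcases i with i | i | ⟨⟩
      · rcases j with j | j | ⟨⟩
        · rw [hee]; simp
        · rw [hef]; split_ifs <;> simp [hζz]
        · rw [show b (Sum.inr (Sum.inr ())) = z from rfl, hez]; simp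
      · rcases j with j | j | ⟨⟩
        · rw [hanti (b (Sum.inl j)) (b (Sum.inr (Sum.inl i))), hef]
          split_ifs <;> simp [hζz]
        · rw [hff]; simp
        · rw [show b (Sum.inr (Sum.inr ())) = z from rfl, hfz]; simp
      · rw [show b (Sum.inr (Sum.inr ())) = z from rfl, hnz0]; simp
    intro x y
    conv_lhs => rw [h]
    simp only [LinearMap.compr₂_apply, LinearMap.comp_apply,
      LinearMap.toSpanSingleton_apply]
  -- basic helpers
  have half2 : ∀ v : V, (2 : K)⁻¹ • (v + v) = v := by
    intro v
    rw [← two_smul K v, smul_smul, inv_mul_cancel₀ (two_ne_zero), one_smul]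
  have hflip : ∀ x y : V, mul y x = mul x y + n x y := by
    intro x y
    have h := hp1 x y
    have h2 : mul y x - mul x y = n x y := by rw [← neg_sub, h, neg_neg]
    rw [sub_eq_iff_eq_add] at h2
    rw [h2, add_comm]
  have hnn : ∀ x y w : V, n (n x y) w = 0 := by
    intro x y w
    rw [hrep x y, map_smul, LinearMap.smul_apply, hnz0, smul_zero]
  have hnn' : ∀ x y w : V, n w (n x y) = 0 := by
    intro x y w
    rw [hrep x y, map_smul, hxz0, smul_zero]
  have hsym1 : ∀ x y w : V, n (mul x y) w = n (mul y x) w := by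
    intro x y w
    rw [hflip x y, map_add, LinearMap.add_apply, hnn, add_zero]
  -- indices
  have i0 : Fin m := ⟨0, by omega⟩
  have hzef : n (b (Sum.inl (⟨0, by omega⟩ : Fin m))) (b (Sum.inr (Sum.inl (⟨0, by omega⟩ : Fin m)))) = z := by
    rw [hef]; simp
  have hspanz : ∀ v : V, (∃ k : K, v = k • z) → v = ζ v • z := by
    rintro v ⟨k, rfl⟩
    rw [map_smul, smul_eq_mul, hζz, mul_one]
  -- mul x z lies in span z
  have hmulz : ∀ x : V, mul x z = ζ (mul x z) • z := by
    intro x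
    apply hspanz
    have h1 : mul x z = n (mul x (b (Sum.inl (⟨0, by omega⟩ : Fin m)))) (b (Sum.inr (Sum.inl (⟨0, by omega⟩ : Fin m)))) + n (b (Sum.inl (⟨0, by omega⟩ : Fin m))) (mul x (b (Sum.inr (Sum.inl (⟨0, by omega⟩ : Fin m))))) := by
      conv_lhs => rw [← hzef]
      exact hp3 x _ _
    rw [hrep (mul x _) _, hrep (b _) (mul x _)] at h1
    exact ⟨_ + _, by rw [h1, add_smul]⟩
  -- the conformal derivation identity, scalar form
  have hC1 : ∀ x y w : V, ζ (n (mul x y) w) - ζ (n (mul x w) y)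
      = ζ (mul x z) * ζ (n y w) := by
    intro x y w
    have h := congrArg ζ (hp3 x y w)
    have hL : ζ (mul x (n y w)) = ζ (mul x z) * ζ (n y w) := by
      conv_lhs => rw [hrep y w]
      rw [map_smul, map_smul, smul_eq_mul, mul_comm]
    have hR : ζ (n (mul x y) w + n y (mul x w))
        = ζ (n (mul x y) w) - ζ (n (mul x w) y) := by
      rw [map_add, hanti (mul x w) y, map_neg, sub_eq_add_neg]
    rw [hL, hR] at h
    exact h.symm
  have hC3 : ∀ x y w : V, ζ (mul x z) * ζ (n y w) - ζ (mul y z) * ζ (n x w)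
      + ζ (mul w z) * ζ (n x y) = 0 := by
    intro x y w
    have h1 := hC1 x y w
    have h2 := hC1 y x w
    have h3 := hC1 w x y
    have s1 := congrArg ζ (hsym1 x y w)
    have s2 := congrArg ζ (hsym1 x w y)
    have s3 := congrArg ζ (hsym1 y w x)
    linear_combination -h1 + h2 - h3 + s1 - s2 + s3
  -- lambda vanishes on the basis
  have hpair : ∀ i : Fin m, ∃ j : Fin m, i ≠ j := by
    intro i
    by_cases h : i.val = 0
    · exact ⟨⟨1, by omega⟩, by simp [Fin.ext_iff, h]⟩
    · exact ⟨⟨0, by omega⟩, by simp [Fin.ext_iff, h]⟩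
  have hlam_e : ∀ i : Fin m, ζ (mul (b (Sum.inl i)) z) = 0 := by
    intro i
    obtain ⟨j, hij⟩ := hpair i
    have h := hC3 (b (Sum.inl i)) (b (Sum.inl j)) (b (Sum.inr (Sum.inl j)))
    rw [hef j j, hef i j, hee i j, if_pos rfl, if_neg hij] at h
    rw [hζz, map_zero] at h
    linear_combination h
  have hlam_f : ∀ i : Fin m, ζ (mul (b (Sum.inr (Sum.inl i))) z) = 0 := by
    intro i
    obtain ⟨j, hij⟩ := hpair i
    have h := hC3 (b (Sum.inr (Sum.inl i))) (b (Sum.inl j)) (b (Sum.inr (Sum.inl j)))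
    have hfe : n (b (Sum.inr (Sum.inl i))) (b (Sum.inl j)) = 0 := by
      rw [hanti (b (Sum.inl j)) (b (Sum.inr (Sum.inl i))), hef, if_neg (Ne.symm hij), neg_zero]
    rw [hef j j, if_pos rfl, hff i j, hfe] at h
    rw [hζz, map_zero] at h
    linear_combination h
  have hlamz : ζ (mul z z) = 0 := by
    have hze : mul z (b (Sum.inl (⟨0, by omega⟩ : Fin m))) = mul (b (Sum.inl (⟨0, by omega⟩ : Fin m))) z := by
      rw [hflip (b (Sum.inl (⟨0, by omega⟩ : Fin m))) z, hxz0, add_zero]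
    have hzf : mul z (b (Sum.inr (Sum.inl (⟨0, by omega⟩ : Fin m)))) = mul (b (Sum.inr (Sum.inl (⟨0, by omega⟩ : Fin m)))) z := by
      rw [hflip (b (Sum.inr (Sum.inl (⟨0, by omega⟩ : Fin m)))) z, hxz0, add_zero]
    have h1 : mul z z = 0 := by
      have h0 := hp3 z (b (Sum.inl (⟨0, by omega⟩ : Fin m))) (b (Sum.inr (Sum.inl (⟨0, by omega⟩ : Fin m))))
      rw [hzef] at h0
      rw [h0, hze, hzf, hmulz (b (Sum.inl _)), hmulz (b (Sum.inr (Sum.inl _)))]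
      rw [map_smul, LinearMap.smul_apply, hnz0, map_smul, hxz0, smul_zero, smul_zero, add_zero]
    rw [h1, map_zero]
  have hlam0 : ∀ x : V, ζ (mul x z) = 0 := by
    have h : (ζ.comp (mul.flip z) : V →ₗ[K] K) = 0 := by
      apply b.ext
      intro i
      rcases i with i | i | ⟨⟩
      · simpa using hlam_e i
      · simpa using hlam_f i
      · simpa using hlamz
    intro x
    have := congrArg (fun f : V →ₗ[K] K => f x) h
    simpa using this
  have hmulxz : ∀ x : V, mul x z = 0 := by
    intro x
    rw [hmulz x, hlam0, zero_smul]
  have hmulzx : ∀ x : V, mul z x = 0 := by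
    intro x
    rw [hflip x z, hmulxz, hxz0, add_zero]
  -- products with the span of z vanish
  have hmuln : ∀ x y w : V, mul x (n y w) = 0 := by
    intro x y w
    rw [hrep y w, map_smul, hmulxz, smul_zero]
  have hnmul : ∀ x y w : V, mul (n y w) x = 0 := by
    intro x y w
    rw [hrep y w, map_smul, LinearMap.smul_apply, hmulzx, smul_zero]
  -- full symmetry of the cubic form
  have hsym2 : ∀ x y w : V, ζ (n (mul x y) w) = ζ (n (mul x w) y) := by
    intro x y w
    have h := hC1 x y w
    rw [hlam0 x, zero_mul] at h
    linear_combination h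
  have hkey2 : ∀ x y w : V, n x (mul y w) = n y (mul x w) := by
    intro x y w
    have hsc : ζ (n (mul y w) x) = ζ (n (mul x w) y) :=
      calc ζ (n (mul y w) x) = ζ (n (mul w y) x) := congrArg ζ (hsym1 y w x)
        _ = ζ (n (mul w x) y) := hsym2 w y x
        _ = ζ (n (mul x w) y) := (congrArg ζ (hsym1 x w y)).symm
    rw [hanti (mul y w) x, hanti (mul x w) y, hrep (mul y w) x, hrep (mul x w) y, hsc]
  -- the key formula for c x (c y w)
  have key : ∀ x y w : V, c x (c y w) = mul x (mul y w) + (2 : K)⁻¹ • n x (mul y w) := by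
    intro x y w
    have hp : mul x (c y w) = mul x (mul y w) := by
      rw [hc y w, hflip y w]
      simp only [map_add, map_smul, hmuln, add_zero]
      exact half2 _
    have hq : n x (c y w) = n x (mul y w) := by
      rw [hc y w, hflip y w]
      simp only [map_add, map_smul, hnn', add_zero]
      exact half2 _
    rw [hc x (c y w), hflip x (c y w), hp, hq, ← add_assoc, smul_add, half2]
  refine ⟨fun x => ⟨hmulzx x, hmulxz x⟩, ?_, ?_, ?_⟩
  · intro x y
    rw [hc, hc, add_comm]
  · intro x y w
    have hL : c (n x y) w = 0 := by
      rw [hc, hnmul, hmuln, add_zero, smul_zero]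
    rw [hL, key x y w, key y x w, hp2 x y w, hkey2 x y w, sub_self]
  · intro x y w
    have hr1 : n (c x y) w = n (mul x y) w := by
      rw [hc x y]
      simp only [map_add, map_smul, LinearMap.add_apply, LinearMap.smul_apply]
      rw [← hsym1 x y w]
      exact half2 _
    have hr2 : n y (c x w) = n y (mul x w) := by
      rw [hc x w, hflip x w]
      simp only [map_add, map_smul, hnn', add_zero]
      exact half2 _
    have hL : c x (n y w) = 0 := by
      rw [hc, hmuln, hnmul, add_zero, smul_zero]
    rw [hL, hr1, hr2, ← hp3, hmuln]
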